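/- arXiv:2307.16817 — 4 statements merged into one kernel-verified Lean document; each statement's English description precedes it below -/
import Mathlib

section
/- Let n ≥ 1, let x_1, …, x_{n+1} and y_1, …, y_n be real numbers, and define L_n(y_1,…,y_n; x_1,…,x_{n+1}) = Σ_{1≤i<j≤n+1} |x_i − x_j| + Σ_{1≤i<j≤n} |y_i − y_j| − Σ_{i=1}^{n+1} Σ_{j=1}^{n} |x_i − y_j|. Then L_n(y_1,…,y_n; x_1,…,x_{n+1}) ≤ 0. -/
open Finset

section LAux
open MeasureTheory

noncomputable def Lchi (u t : ℝ) : ℝ := if u ≤ t then 1 else 0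

noncomputable def LF (u v : ℝ) : ℝ → ℝ := fun t => (Lchi u t - Lchi v t) ^ 2

lemma LF_eq_indicator (u v : ℝ) :
    LF u v = Set.indicator (Set.Ico (min u v) (max u v)) 1 := by
  funext t
  simp only [LF, Lchi, Set.indicator, Set.mem_Ico, Pi.one_apply]
  by_cases h1 : u ≤ t <;> by_cases h2 : v ≤ t
  · rw [if_pos h1, if_pos h2, if_neg]; · ring
    rintro ⟨-, h⟩
    rcases lt_max_iff.1 h with h' | h' <;> linarith
  · rw [if_pos h1, if_neg h2, if_pos]; · ring
    exact ⟨min_le_iff.2 (Or.inl h1), lt_max_iff.2 (Or.inr (not_le.1 h2))⟩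
  · rw [if_neg h1, if_pos h2, if_pos]; · ring
    exact ⟨min_le_iff.2 (Or.inr h2), lt_max_iff.2 (Or.inl (not_le.1 h1))⟩
  · rw [if_neg h1, if_neg h2, if_neg]; · ring
    rintro ⟨h, -⟩
    rcases min_le_iff.1 h with h' | h' <;> linarith [not_le.1 h1, not_le.1 h2]

lemma LF_integrable (u v : ℝ) : Integrable (LF u v) := by
  rw [LF_eq_indicator]
  rw [integrable_indicator_iff measurableSet_Ico]
  refine integrableOn_const ?_ ?_
  · rw [Real.volume_Ico]
    exact ENNReal.ofReal_ne_top
  · simp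

lemma LF_integral (u v : ℝ) : ∫ t, LF u v t = |u - v| := by
  rw [LF_eq_indicator, integral_indicator_one measurableSet_Ico, measureReal_def, Real.volume_Ico,
    ENNReal.toReal_ofReal (by simp [sub_nonneg, min_le_max]),
    max_sub_min_eq_abs, abs_sub_comm]

lemma Lexpand (m : ℕ) (c : Fin m → ℝ) :
    ∑ i, ∑ j, (c i - c j)^2 = 2*m*(∑ i, (c i)^2) - 2*(∑ i, c i)^2 := by
  have h : ∀ i : Fin m, ∑ j, (c i - c j)^2
      = m * (c i)^2 - 2 * (c i * ∑ j, c j) + ∑ j, (c j)^2 := by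
    intro i
    have e : ∀ j : Fin m, (c i - c j)^2 = (c i)^2 - 2*(c i * c j) + (c j)^2 := fun j => by ring
    simp_rw [e, Finset.sum_add_distrib, Finset.sum_sub_distrib, Finset.sum_const,
      Finset.card_univ, Fintype.card_fin, ← Finset.mul_sum, nsmul_eq_mul]
  simp_rw [h, Finset.sum_add_distrib, Finset.sum_sub_distrib, ← Finset.mul_sum, ← Finset.sum_mul,
    Finset.sum_const, Finset.card_univ, Fintype.card_fin, nsmul_eq_mul]
  ring

lemma Lcross (m k : ℕ) (a : Fin m → ℝ) (b : Fin k → ℝ) :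
    ∑ i, ∑ j, (a i - b j)^2
      = k*(∑ i, (a i)^2) + m*(∑ j, (b j)^2) - 2*(∑ i, a i)*(∑ j, b j) := by
  have h : ∀ i : Fin m, ∑ j, (a i - b j)^2
      = k * (a i)^2 - 2 * (a i * ∑ j, b j) + ∑ j, (b j)^2 := by
    intro i
    have e : ∀ j : Fin k, (a i - b j)^2 = (a i)^2 - 2*(a i * b j) + (b j)^2 := fun j => by ring
    simp_rw [e, Finset.sum_add_distrib, Finset.sum_sub_distrib, Finset.sum_const,
      Finset.card_univ, Fintype.card_fin, ← Finset.mul_sum, nsmul_eq_mul]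
  simp_rw [h, Finset.sum_add_distrib, Finset.sum_sub_distrib, ← Finset.mul_sum, ← Finset.sum_mul,
    Finset.sum_const, Finset.card_univ, Fintype.card_fin, nsmul_eq_mul]
  ring

lemma Lhalf (m : ℕ) (c : Fin m → ℝ) :
    2 * (∑ i, ∑ j, if i < j then (c i - c j)^2 else 0) = ∑ i, ∑ j, (c i - c j)^2 := by
  have key : ∀ i j : Fin m, (c i - c j)^2
      = (if i < j then (c i - c j)^2 else 0) + (if j < i then (c i - c j)^2 else 0) := by
    intro i j
    rcases lt_trichotomy i j with h | h | h
    · simp [h, asymm h]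
    · subst h; simp
    · simp [h, asymm h]
  have swap : (∑ i, ∑ j, if j < i then (c i - c j)^2 else 0)
      = ∑ i, ∑ j, if i < j then (c i - c j)^2 else 0 := by
    rw [Finset.sum_comm]
    refine Finset.sum_congr rfl fun i _ => Finset.sum_congr rfl fun j _ => ?_
    split_ifs <;> [ring; rfl]
  have split : ∑ i, ∑ j, (c i - c j)^2
      = (∑ i, ∑ j, if i < j then (c i - c j)^2 else 0)
        + ∑ i, ∑ j, if j < i then (c i - c j)^2 else 0 := by
    simp_rw [← Finset.sum_add_distrib]
    exact Finset.sum_congr rfl fun i _ => Finset.sum_congr rfl fun j _ => key i j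
  rw [split, swap]; ring

lemma Lptwise (n : ℕ) (a : Fin (n+1) → ℝ) (b : Fin n → ℝ)
    (ha : ∀ i, a i = 0 ∨ a i = 1) (hb : ∀ j, b j = 0 ∨ b j = 1) :
    (∑ i, ∑ j, if i < j then (a i - a j)^2 else 0)
      + (∑ i, ∑ j, if i < j then (b i - b j)^2 else 0)
      - ∑ i, ∑ j, (a i - b j)^2 ≤ 0 := by
  have hsa : ∑ i, (a i)^2 = ∑ i, a i :=
    Finset.sum_congr rfl fun i _ => by rcases ha i with h | h <;> rw [h] <;> norm_num
  have hsb : ∑ j, (b j)^2 = ∑ j, b j :=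
    Finset.sum_congr rfl fun j _ => by rcases hb j with h | h <;> rw [h] <;> norm_num
  obtain ⟨p, hp⟩ : ∃ p : ℕ, ∑ i, a i = p := by
    refine ⟨∑ i, (if a i = 1 then 1 else 0), ?_⟩
    push_cast
    exact Finset.sum_congr rfl fun i _ => by rcases ha i with h | h <;> simp [h]
  obtain ⟨q, hq⟩ : ∃ q : ℕ, ∑ j, b j = q := by
    refine ⟨∑ j, (if b j = 1 then 1 else 0), ?_⟩
    push_cast
    exact Finset.sum_congr rfl fun j _ => by rcases hb j with h | h <;> simp [h]
  have hd : ((p:ℝ) - q) ≤ ((p:ℝ) - q)^2 := by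
    have hz : ((p:ℤ) - q) ≤ ((p:ℤ) - q)^2 := by
      rcases le_or_gt ((p:ℤ) - q) 0 with h | h
      · nlinarith
      · have h1 : 1 ≤ (p:ℤ) - q := h
        nlinarith
    exact_mod_cast hz
  have e1 := Lhalf (n+1) a
  have e2 := Lhalf n b
  have e3 := Lexpand (n+1) a
  have e4 := Lexpand n b
  have e5 := Lcross (n+1) n a b
  rw [hsa, hp] at e3
  rw [hsb, hq] at e4
  rw [hsa, hsb, hp, hq] at e5
  rw [e5]
  push_cast at e3 e4 ⊢
  nlinarith [e1, e2, e3, e4, hd]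

theorem L_nonpos (n : ℕ) (hn : 1 ≤ n) (x : Fin (n + 1) → ℝ) (y : Fin n → ℝ) :
    (∑ i : Fin (n + 1), ∑ j : Fin (n + 1), if i < j then |x i - x j| else 0)
      + (∑ i : Fin n, ∑ j : Fin n, if i < j then |y i - y j| else 0)
      - ∑ i : Fin (n + 1), ∑ j : Fin n, |x i - y j| ≤ 0 := by
  have hIf : ∀ {m : ℕ} (u v : ℝ) (P : Prop) [Decidable P],
      Integrable (fun t => if P then LF u v t else 0) := by
    intro m u v P _
    by_cases h : P
    · simpa [h] using LF_integrable u v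
    · simp only [h, if_false]
      exact integrable_zero _ _ _
  have hIfInt : ∀ (u v : ℝ) (P : Prop) [Decidable P],
      ∫ t, (if P then LF u v t else 0) = if P then |u - v| else 0 := by
    intro u v P _
    by_cases h : P <;> simp [h, LF_integral]
  have hS1 : Integrable (fun t => ∑ i : Fin (n+1), ∑ j : Fin (n+1),
      if i < j then LF (x i) (x j) t else 0) :=
    integrable_finset_sum _ fun i _ => integrable_finset_sum _ fun j _ => hIf (m := 0) _ _ _
  have hS2 : Integrable (fun t => ∑ i : Fin n, ∑ j : Fin n,
      if i < j then LF (y i) (y j) t else 0) :=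
    integrable_finset_sum _ fun i _ => integrable_finset_sum _ fun j _ => hIf (m := 0) _ _ _
  have hS3 : Integrable (fun t => ∑ i : Fin (n+1), ∑ j : Fin n, LF (x i) (y j) t) :=
    integrable_finset_sum _ fun i _ => integrable_finset_sum _ fun j _ => LF_integrable _ _
  have q1 : (∑ i : Fin (n + 1), ∑ j : Fin (n + 1), if i < j then |x i - x j| else 0)
      = ∫ t, ∑ i : Fin (n+1), ∑ j : Fin (n+1), if i < j then LF (x i) (x j) t else 0 := by
    rw [integral_finset_sum _ (fun i _ => integrable_finset_sum _ fun j _ => hIf (m := 0) _ _ _)]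
    refine Finset.sum_congr rfl fun i _ => ?_
    rw [integral_finset_sum _ (fun j _ => hIf (m := 0) _ _ _)]
    exact Finset.sum_congr rfl fun j _ => (hIfInt _ _ _).symm
  have q2 : (∑ i : Fin n, ∑ j : Fin n, if i < j then |y i - y j| else 0)
      = ∫ t, ∑ i : Fin n, ∑ j : Fin n, if i < j then LF (y i) (y j) t else 0 := by
    rw [integral_finset_sum _ (fun i _ => integrable_finset_sum _ fun j _ => hIf (m := 0) _ _ _)]
    refine Finset.sum_congr rfl fun i _ => ?_
    rw [integral_finset_sum _ (fun j _ => hIf (m := 0) _ _ _)]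
    exact Finset.sum_congr rfl fun j _ => (hIfInt _ _ _).symm
  have q3 : (∑ i : Fin (n + 1), ∑ j : Fin n, |x i - y j|)
      = ∫ t, ∑ i : Fin (n+1), ∑ j : Fin n, LF (x i) (y j) t := by
    rw [integral_finset_sum _ (fun i _ => integrable_finset_sum _ fun j _ => LF_integrable _ _)]
    refine Finset.sum_congr rfl fun i _ => ?_
    rw [integral_finset_sum _ (fun j _ => LF_integrable _ _)]
    exact Finset.sum_congr rfl fun j _ => (LF_integral _ _).symm
  have key : (∑ i : Fin (n + 1), ∑ j : Fin (n + 1), if i < j then |x i - x j| else 0)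
      + (∑ i : Fin n, ∑ j : Fin n, if i < j then |y i - y j| else 0)
      - ∑ i : Fin (n + 1), ∑ j : Fin n, |x i - y j|
      = ∫ t, ((∑ i : Fin (n+1), ∑ j : Fin (n+1), if i < j then LF (x i) (x j) t else 0)
          + (∑ i : Fin n, ∑ j : Fin n, if i < j then LF (y i) (y j) t else 0)
          - ∑ i : Fin (n+1), ∑ j : Fin n, LF (x i) (y j) t) := by
    rw [integral_sub (by exact hS1.add hS2) hS3, integral_add hS1 hS2, q1, q2, q3]
  rw [key]
  apply integral_nonpos
  intro t
  exact Lptwise n (fun i => Lchi (x i) t) (fun j => Lchi (y j) t)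
    (fun i => by by_cases h : x i ≤ t <;> simp [Lchi, h])
    (fun j => by by_cases h : y j ≤ t <;> simp [Lchi, h])

end LAux
end

section
/- Let n ≥ 1, x, y ∈ ℝ^n, and define R_n(y; x) = Σ_{1≤i<j≤n} |x_i − x_j| + Σ_{1≤i<j≤n} |y_i − y_j| − Σ_{i=1}^{n} Σ_{j=1}^{n} |x_i − y_j|, and ‖x‖ = |x_1| + … + |x_n|. Then for every ε ∈ [0, 1] one has R_n(y; x) ≤ ε (‖y‖ − ‖x‖). -/
open Finset
open MeasureTheory

noncomputable def chi (a t : ℝ) : ℝ := if a ≤ t then 1 else 0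

lemma chi_mem (a t : ℝ) : chi a t = 0 ∨ chi a t = 1 := by
  unfold chi; split_ifs <;> simp

lemma abs_chi_eq (a b : ℝ) :
    (fun t => |chi a t - chi b t|) =
      Set.indicator (Set.Ico (min a b) (max a b)) (fun _ => (1:ℝ)) := by
  funext t
  unfold chi
  by_cases h1 : a ≤ t <;> by_cases h2 : b ≤ t
  · have : ¬ t ∈ Set.Ico (min a b) (max a b) :=
      fun h => absurd h.2 (not_lt.2 (max_le h1 h2))
    simp [h1, h2, Set.indicator_of_notMem this]
  · have : t ∈ Set.Ico (min a b) (max a b) :=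
      ⟨min_le_of_left_le h1, lt_max_of_lt_right (not_le.1 h2)⟩
    simp [h1, h2, Set.indicator_of_mem this]
  · have : t ∈ Set.Ico (min a b) (max a b) :=
      ⟨min_le_of_right_le h2, lt_max_of_lt_left (not_le.1 h1)⟩
    simp [h1, h2, Set.indicator_of_mem this]
  · have : ¬ t ∈ Set.Ico (min a b) (max a b) :=
      fun h => absurd h.1 (not_le.2 (lt_min (not_le.1 h1) (not_le.1 h2)))
    simp [h1, h2, Set.indicator_of_notMem this]

lemma chi_intervalIntegrable (a b A B : ℝ) :
    IntervalIntegrable (fun t => |chi a t - chi b t|) volume A B := by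
  rw [abs_chi_eq]
  apply MeasureTheory.Integrable.intervalIntegrable
  rw [MeasureTheory.integrable_indicator_iff measurableSet_Ico]
  exact MeasureTheory.integrableOn_const (by rw [Real.volume_Ico]; exact ENNReal.ofReal_ne_top) (by simp)

lemma chi_integral (M a b : ℝ) (ha : |a| < M) (hb : |b| < M) :
    ∫ t in (-M)..M, |chi a t - chi b t| = |a - b| := by
  have hM : (0:ℝ) < M := lt_of_le_of_lt (abs_nonneg a) ha
  have hMM : (-M) ≤ M := by linarith
  have hsub : Set.Ico (min a b) (max a b) ⊆ Set.Ioc (-M) M := by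
    intro t ht
    have h1 : -M < min a b := by
      rcases abs_lt.1 ha with ⟨ha1, _⟩
      rcases abs_lt.1 hb with ⟨hb1, _⟩
      exact lt_min ha1 hb1
    have h2 : max a b < M := max_lt (abs_lt.1 ha).2 (abs_lt.1 hb).2
    exact ⟨lt_of_lt_of_le h1 ht.1, le_of_lt (lt_trans ht.2 h2)⟩
  rw [abs_chi_eq, intervalIntegral.integral_of_le hMM,
    MeasureTheory.integral_indicator measurableSet_Ico]
  rw [MeasureTheory.setIntegral_const]
  rw [MeasureTheory.measureReal_def, MeasureTheory.Measure.restrict_apply measurableSet_Ico]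
  rw [Set.inter_eq_left.2 hsub]
  rw [Real.volume_Ico]
  rw [ENNReal.toReal_ofReal (by simp [min_le_max] : (0:ℝ) ≤ max a b - min a b)]
  rw [max_sub_min_eq_abs]
  rw [smul_eq_mul, mul_one]; exact abs_sub_comm b a
open Finset

lemma abs01 {p q : ℝ} (hp : p = 0 ∨ p = 1) (hq : q = 0 ∨ q = 1) :
    |p - q| = p + q - 2 * p * q := by
  rcases hp with h | h <;> rcases hq with h' | h' <;> subst h <;> subst h' <;> norm_num

lemma sum_if_half {n : ℕ} (f : Fin n → Fin n → ℝ) (hsymm : ∀ i j, f i j = f j i)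
    (hdiag : ∀ i, f i i = 0) :
    (∑ i, ∑ j, if i < j then f i j else 0) = (1/2) * ∑ i, ∑ j, f i j := by
  have key : ∑ i, ∑ j, f i j
      = (∑ i, ∑ j, if i < j then f i j else 0) + ∑ i, ∑ j, if j < i then f i j else 0 := by
    rw [← Finset.sum_add_distrib]
    apply Finset.sum_congr rfl
    intro i _
    rw [← Finset.sum_add_distrib]
    apply Finset.sum_congr rfl
    intro j _
    rcases lt_trichotomy i j with h | h | h
    · simp [h, not_lt.2 h.le]
    · subst h; simp [hdiag]
    · simp [h, not_lt.2 h.le]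
  have swap : (∑ i, ∑ j, if j < i then f i j else 0)
      = ∑ i, ∑ j, if i < j then f i j else 0 := by
    rw [Finset.sum_comm]
    apply Finset.sum_congr rfl
    intro i _
    apply Finset.sum_congr rfl
    intro j _
    simp [hsymm i j]
  rw [swap] at key
  linarith

lemma sum_eq_nat {n : ℕ} (c : Fin n → ℝ) (hc : ∀ i, c i = 0 ∨ c i = 1) :
    ∃ m : ℕ, ∑ i, c i = (m : ℝ) := by
  refine ⟨(univ.filter (fun i => c i = 1)).card, ?_⟩
  rw [← Finset.sum_boole]
  apply Finset.sum_congr rfl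
  intro i _
  rcases hc i with h | h <;> simp [h]

lemma nat_abs_le_sq (m k : ℕ) : |(m:ℝ) - k| ≤ ((m:ℝ) - k)^2 := by
  rcases le_total k m with h | h
  · have h1 : (m:ℝ) - k = ((m - k : ℕ) : ℝ) := by push_cast [Nat.cast_sub h]; ring
    rw [h1, abs_of_nonneg (by positivity)]
    have : (m - k : ℕ) ≤ (m - k : ℕ)^2 := Nat.le_self_pow two_ne_zero _
    exact_mod_cast this
  · have h1 : (m:ℝ) - k = -(((k - m : ℕ) : ℝ)) := by push_cast [Nat.cast_sub h]; ring
    rw [h1, abs_neg, abs_of_nonneg (by positivity), neg_pow]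
    norm_num
    have : (k - m : ℕ) ≤ (k - m : ℕ)^2 := Nat.le_self_pow two_ne_zero _
    exact_mod_cast this

lemma cross_sum {n : ℕ} (c d : Fin n → ℝ) (hc : ∀ i, c i = 0 ∨ c i = 1)
    (hd : ∀ i, d i = 0 ∨ d i = 1) :
    ∑ i, ∑ j, |c i - d j|
      = n * (∑ i, c i) + n * (∑ i, d i) - 2 * (∑ i, c i) * (∑ i, d i) := by
  have h1 : ∀ i ∈ univ, ∑ j, |c i - d j| = n * c i + (∑ j, d j) - 2 * c i * (∑ j, d j) := by
    intro i _
    have h2 : ∀ j ∈ univ, |c i - d j| = c i + d j - 2 * (c i * d j) := by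
      intro j _; rw [abs01 (hc i) (hd j)]; ring
    rw [Finset.sum_congr rfl h2, Finset.sum_sub_distrib, Finset.sum_add_distrib,
      Finset.sum_const, ← Finset.mul_sum, ← Finset.mul_sum]
    simp [Fintype.card_fin]
    ring
  rw [Finset.sum_congr rfl h1, Finset.sum_sub_distrib, Finset.sum_add_distrib,
    Finset.sum_const, ← Finset.mul_sum, ← Finset.sum_mul, ← Finset.mul_sum]
  simp [Fintype.card_fin]
  try ring

lemma LHS_eq {n : ℕ} (c d : Fin n → ℝ) (hc : ∀ i, c i = 0 ∨ c i = 1)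
    (hd : ∀ i, d i = 0 ∨ d i = 1) :
    (∑ i, ∑ j, if i < j then |c i - c j| else 0)
      + (∑ i, ∑ j, if i < j then |d i - d j| else 0)
      - (∑ i, ∑ j, |c i - d j|)
    = -(((∑ i, c i) - ∑ i, d i))^2 := by
  rw [sum_if_half (fun i j => |c i - c j|) (fun i j => abs_sub_comm _ _) (fun i => by simp),
    sum_if_half (fun i j => |d i - d j|) (fun i j => abs_sub_comm _ _) (fun i => by simp),
    cross_sum c c hc hc, cross_sum d d hd hd, cross_sum c d hc hd]
  ring

lemma pointwise_le_zero {n : ℕ} (c d : Fin n → ℝ) (hc : ∀ i, c i = 0 ∨ c i = 1)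
    (hd : ∀ i, d i = 0 ∨ d i = 1) :
    (∑ i, ∑ j, if i < j then |c i - c j| else 0)
      + (∑ i, ∑ j, if i < j then |d i - d j| else 0)
      - (∑ i, ∑ j, |c i - d j|) ≤ 0 := by
  rw [LHS_eq c d hc hd]
  exact neg_nonpos.2 (sq_nonneg _)

lemma pointwise_le {n : ℕ} (c d : Fin n → ℝ) (e : ℝ) (hc : ∀ i, c i = 0 ∨ c i = 1)
    (hd : ∀ i, d i = 0 ∨ d i = 1) (he : e = 0 ∨ e = 1) :
    (∑ i, ∑ j, if i < j then |c i - c j| else 0)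
      + (∑ i, ∑ j, if i < j then |d i - d j| else 0)
      - (∑ i, ∑ j, |c i - d j|)
    ≤ (∑ j, |d j - e|) - ∑ i, |c i - e| := by
  rw [LHS_eq c d hc hd]
  obtain ⟨mu, hu⟩ := sum_eq_nat c hc
  obtain ⟨mv, hv⟩ := sum_eq_nat d hd
  have habs := nat_abs_le_sq mu mv
  have hneg := neg_abs_le ((mu:ℝ) - mv)
  have hpos := le_abs_self ((mu:ℝ) - mv)
  rcases he with he | he <;> subst he
  · have h1 : ∀ j ∈ univ, |d j - 0| = d j := by
      intro j _; rcases hd j with h | h <;> simp [h]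
    have h2 : ∀ i ∈ univ, |c i - 0| = c i := by
      intro i _; rcases hc i with h | h <;> simp [h]
    rw [Finset.sum_congr rfl h1, Finset.sum_congr rfl h2, hu, hv]
    nlinarith [habs, hneg, hpos]
  · have h1 : ∀ j ∈ univ, |d j - 1| = 1 - d j := by
      intro j _; rcases hd j with h | h <;> simp [h]
    have h2 : ∀ i ∈ univ, |c i - 1| = 1 - c i := by
      intro i _; rcases hc i with h | h <;> simp [h]
    rw [Finset.sum_congr rfl h1, Finset.sum_congr rfl h2, Finset.sum_sub_distrib,
      Finset.sum_sub_distrib, hu, hv]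
    nlinarith [habs, hneg, hpos]
open Finset MeasureTheory

lemma intervalIntegrable_fin_sum {n : ℕ} (F : Fin n → ℝ → ℝ) (A B : ℝ)
    (h : ∀ i, IntervalIntegrable (F i) volume A B) :
    IntervalIntegrable (fun t => ∑ i, F i t) volume A B := by
  have h1 : (fun t => ∑ i, F i t) = ∑ i ∈ (univ : Finset (Fin n)), fun t => F i t := by
    funext t; rw [Finset.sum_apply]
  rw [h1]
  exact IntervalIntegrable.sum _ (fun i _ => h i)

lemma intervalIntegrable_fin_sum2 {n : ℕ} (F : Fin n → Fin n → ℝ → ℝ) (A B : ℝ)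
    (h : ∀ i j, IntervalIntegrable (F i j) volume A B) :
    IntervalIntegrable (fun t => ∑ i, ∑ j, F i j t) volume A B := by
  apply intervalIntegrable_fin_sum
  intro i
  exact intervalIntegrable_fin_sum _ _ _ (h i)

lemma integral_fin_sum2 {n : ℕ} (F : Fin n → Fin n → ℝ → ℝ) (A B : ℝ)
    (h : ∀ i j, IntervalIntegrable (F i j) volume A B) :
    ∫ t in A..B, ∑ i, ∑ j, F i j t = ∑ i, ∑ j, ∫ t in A..B, F i j t := by
  rw [intervalIntegral.integral_finset_sum
    (fun i _ => intervalIntegrable_fin_sum _ _ _ (h i))]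
  exact Finset.sum_congr rfl fun i _ =>
    intervalIntegral.integral_finset_sum (fun j _ => h i j)

theorem R_le_eps_mul (n : ℕ) (hn : 1 ≤ n) (x y : Fin n → ℝ) (ε : ℝ)
    (hε : ε ∈ Set.Icc (0 : ℝ) 1) :
    (∑ i : Fin n, ∑ j : Fin n, if i < j then |x i - x j| else 0)
      + (∑ i : Fin n, ∑ j : Fin n, if i < j then |y i - y j| else 0)
      - (∑ i : Fin n, ∑ j : Fin n, |x i - y j|)
    ≤ ε * ((∑ i : Fin n, |y i|) - ∑ i : Fin n, |x i|) := by
  obtain ⟨hε0, hε1⟩ := hε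
  set M : ℝ := 1 + (∑ i, |x i|) + ∑ i, |y i| with hMdef
  have hsx : (0:ℝ) ≤ ∑ i, |x i| := Finset.sum_nonneg fun i _ => abs_nonneg _
  have hsy : (0:ℝ) ≤ ∑ i, |y i| := Finset.sum_nonneg fun i _ => abs_nonneg _
  have hM0 : (0:ℝ) < M := by rw [hMdef]; linarith
  have hMx : ∀ i, |x i| < M := fun i => by
    have := Finset.single_le_sum (fun j (_ : j ∈ univ) => abs_nonneg (x j)) (mem_univ i)
    rw [hMdef]; linarith
  have hMy : ∀ i, |y i| < M := fun i => by
    have := Finset.single_le_sum (fun j (_ : j ∈ univ) => abs_nonneg (y j)) (mem_univ i)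
    rw [hMdef]; linarith
  have hM00 : |(0:ℝ)| < M := by simpa using hM0
  have hMM : (-M) ≤ M := by linarith
  have hii : ∀ (i j : Fin n) (a b : ℝ), IntervalIntegrable
      (fun t => if i < j then |chi a t - chi b t| else 0) volume (-M) M := by
    intro i j a b
    by_cases h : i < j
    · simp only [if_pos h]; exact chi_intervalIntegrable a b _ _
    · simp only [if_neg h]; exact intervalIntegrable_const
  have hint1 : IntervalIntegrable
      (fun t => ∑ i, ∑ j, if i < j then |chi (x i) t - chi (x j) t| else 0) volume (-M) M :=
    intervalIntegrable_fin_sum2 _ _ _ (fun i j => hii i j _ _)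
  have hint2 : IntervalIntegrable
      (fun t => ∑ i, ∑ j, if i < j then |chi (y i) t - chi (y j) t| else 0) volume (-M) M :=
    intervalIntegrable_fin_sum2 _ _ _ (fun i j => hii i j _ _)
  have hint3 : IntervalIntegrable
      (fun t => ∑ i, ∑ j, |chi (x i) t - chi (y j) t|) volume (-M) M :=
    intervalIntegrable_fin_sum2 _ _ _ (fun i j => chi_intervalIntegrable _ _ _ _)
  have hintY : IntervalIntegrable (fun t => ∑ j, |chi (y j) t - chi 0 t|) volume (-M) M :=
    intervalIntegrable_fin_sum _ _ _ (fun j => chi_intervalIntegrable _ _ _ _)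
  have hintX : IntervalIntegrable (fun t => ∑ i, |chi (x i) t - chi 0 t|) volume (-M) M :=
    intervalIntegrable_fin_sum _ _ _ (fun i => chi_intervalIntegrable _ _ _ _)
  have e1 : ∫ t in (-M)..M, ∑ i, ∑ j, (if i < j then |chi (x i) t - chi (x j) t| else 0)
      = ∑ i, ∑ j, if i < j then |x i - x j| else 0 := by
    rw [integral_fin_sum2 _ _ _ (fun i j => hii i j _ _)]
    refine Finset.sum_congr rfl fun i _ => Finset.sum_congr rfl fun j _ => ?_
    by_cases h : i < j
    · simp only [if_pos h]; exact chi_integral M _ _ (hMx i) (hMx j)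
    · simp only [if_neg h]; exact intervalIntegral.integral_zero
  have e2 : ∫ t in (-M)..M, ∑ i, ∑ j, (if i < j then |chi (y i) t - chi (y j) t| else 0)
      = ∑ i, ∑ j, if i < j then |y i - y j| else 0 := by
    rw [integral_fin_sum2 _ _ _ (fun i j => hii i j _ _)]
    refine Finset.sum_congr rfl fun i _ => Finset.sum_congr rfl fun j _ => ?_
    by_cases h : i < j
    · simp only [if_pos h]; exact chi_integral M _ _ (hMy i) (hMy j)
    · simp only [if_neg h]; exact intervalIntegral.integral_zero
  have e3 : ∫ t in (-M)..M, ∑ i, ∑ j, |chi (x i) t - chi (y j) t|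
      = ∑ i, ∑ j, |x i - y j| := by
    rw [integral_fin_sum2 _ _ _ (fun i j => chi_intervalIntegrable _ _ _ _)]
    exact Finset.sum_congr rfl fun i _ => Finset.sum_congr rfl fun j _ =>
      chi_integral M _ _ (hMx i) (hMy j)
  have e4 : ∫ t in (-M)..M, ∑ j, |chi (y j) t - chi 0 t| = ∑ j, |y j| := by
    rw [intervalIntegral.integral_finset_sum (fun j _ => chi_intervalIntegrable _ _ _ _)]
    refine Finset.sum_congr rfl fun j _ => ?_
    rw [chi_integral M _ _ (hMy j) hM00, sub_zero]
  have e5 : ∫ t in (-M)..M, ∑ i, |chi (x i) t - chi 0 t| = ∑ i, |x i| := by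
    rw [intervalIntegral.integral_finset_sum (fun i _ => chi_intervalIntegrable _ _ _ _)]
    refine Finset.sum_congr rfl fun i _ => ?_
    rw [chi_integral M _ _ (hMx i) hM00, sub_zero]
  have eG : ∫ t in (-M)..M,
        ((∑ i, ∑ j, if i < j then |chi (x i) t - chi (x j) t| else 0)
          + (∑ i, ∑ j, if i < j then |chi (y i) t - chi (y j) t| else 0)
          - ∑ i, ∑ j, |chi (x i) t - chi (y j) t|)
      = (∑ i : Fin n, ∑ j : Fin n, if i < j then |x i - x j| else 0)
          + (∑ i : Fin n, ∑ j : Fin n, if i < j then |y i - y j| else 0)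
          - (∑ i : Fin n, ∑ j : Fin n, |x i - y j|) := by
    rw [intervalIntegral.integral_sub (hint1.add hint2) hint3,
      intervalIntegral.integral_add hint1 hint2, e1, e2, e3]
  have eH : ∫ t in (-M)..M,
        ((∑ j, |chi (y j) t - chi 0 t|) - ∑ i, |chi (x i) t - chi 0 t|)
      = (∑ i : Fin n, |y i|) - ∑ i : Fin n, |x i| := by
    rw [intervalIntegral.integral_sub hintY hintX, e4, e5]
  have key0 : (∑ i : Fin n, ∑ j : Fin n, if i < j then |x i - x j| else 0)
      + (∑ i : Fin n, ∑ j : Fin n, if i < j then |y i - y j| else 0)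
      - (∑ i : Fin n, ∑ j : Fin n, |x i - y j|) ≤ 0 := by
    rw [← eG]
    have := intervalIntegral.integral_mono_on (μ := volume) hMM
      ((hint1.add hint2).sub hint3) (intervalIntegrable_const (c := (0:ℝ)))
      (fun t _ => pointwise_le_zero (fun i => chi (x i) t) (fun i => chi (y i) t)
        (fun i => chi_mem _ t) (fun i => chi_mem _ t))
    simpa using this
  have key1 : (∑ i : Fin n, ∑ j : Fin n, if i < j then |x i - x j| else 0)
      + (∑ i : Fin n, ∑ j : Fin n, if i < j then |y i - y j| else 0)
      - (∑ i : Fin n, ∑ j : Fin n, |x i - y j|)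
      ≤ (∑ i : Fin n, |y i|) - ∑ i : Fin n, |x i| := by
    rw [← eG, ← eH]
    exact intervalIntegral.integral_mono_on (μ := volume) hMM
      ((hint1.add hint2).sub hint3) (hintY.sub hintX)
      (fun t _ => pointwise_le (fun i => chi (x i) t) (fun i => chi (y i) t) (chi 0 t)
        (fun i => chi_mem _ t) (fun i => chi_mem _ t) (chi_mem _ t))
  nlinarith [mul_le_mul_of_nonneg_left key1 hε0,
    mul_nonpos_of_nonneg_of_nonpos (by linarith : (0:ℝ) ≤ 1 - ε) key0]
end

section
/- Let n ≥ 1 and x, y ∈ ℝ^n. Then R_n(y; x) ≤ 0, where R_n(y; x) = Σ_{1≤i<j≤n} |x_i − x_j| + Σ_{1≤i<j≤n} |y_i − y_j| − Σ_{i=1}^{n} Σ_{j=1}^{n} |x_i − y_j|. -/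
open Finset MeasureTheory

noncomputable def Dfun (a b : ℝ) : ℝ → ℝ :=
  fun t => (if a ≤ t then 1 else 0) - (if b ≤ t then 1 else 0)

lemma Dfun_eq (a b : ℝ) : Dfun a b =
    (Set.Ico a b).indicator (fun _ => (1:ℝ)) - (Set.Ico b a).indicator (fun _ => (1:ℝ)) := by
  funext t
  simp only [Dfun, Set.indicator, Set.mem_Ico, Pi.sub_apply]
  by_cases h1 : a ≤ t <;> by_cases h2 : b ≤ t <;>
    simp [h1, h2, not_lt.2, lt_of_not_ge, not_le.1]

lemma integrable_Dfun (a b : ℝ) : Integrable (Dfun a b) := by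
  rw [Dfun_eq]
  apply Integrable.sub <;>
  · rw [integrable_indicator_iff measurableSet_Ico]
    exact integrableOn_const measure_Ico_lt_top.ne

lemma integral_Dfun (a b : ℝ) : ∫ t, Dfun a b t = b - a := by
  have h1 : ∀ c d : ℝ, ∫ t, ((Set.Ico c d).indicator (fun _ => (1:ℝ))) t = max (d - c) 0 := by
    intro c d
    rw [MeasureTheory.integral_indicator measurableSet_Ico, setIntegral_const,
      measureReal_def, Real.volume_Ico, smul_eq_mul, mul_one]
    rcases le_total c d with h | h
    · rw [ENNReal.toReal_ofReal (by linarith), max_eq_left (by linarith)]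
    · rw [ENNReal.ofReal_of_nonpos (by linarith), max_eq_right (by linarith)]
      simp
  rw [Dfun_eq]
  have hint : ∀ c d : ℝ, Integrable ((Set.Ico c d).indicator (fun _ => (1:ℝ))) := by
    intro c d
    rw [integrable_indicator_iff measurableSet_Ico]
    exact integrableOn_const measure_Ico_lt_top.ne
  rw [show ((Set.Ico a b).indicator (fun _ => (1:ℝ)) - (Set.Ico b a).indicator (fun _ => (1:ℝ)))
      = fun t => ((Set.Ico a b).indicator (fun _ => (1:ℝ))) t
        - ((Set.Ico b a).indicator (fun _ => (1:ℝ))) t from rfl,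
    integral_sub (hint a b) (hint b a), h1, h1]
  rcases le_total a b with h | h
  · rw [max_eq_left (by linarith), max_eq_right (by linarith)]; ring
  · rw [max_eq_right (by linarith), max_eq_left (by linarith)]; ring

lemma Dfun_mul (a b c d : ℝ) (t : ℝ) :
    Dfun a b t * Dfun c d t = Dfun (a ⊔ c) (a ⊔ d) t + Dfun (b ⊔ d) (b ⊔ c) t := by
  simp only [Dfun, max_le_iff]
  by_cases h1 : a ≤ t <;> by_cases h2 : b ≤ t <;> by_cases h3 : c ≤ t <;> by_cases h4 : d ≤ t <;>
    simp [h1, h2, h3, h4]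

lemma integral_Dfun_mul (a b c d : ℝ) :
    ∫ t, Dfun a b t * Dfun c d t = ((a ⊔ d) - (a ⊔ c)) + ((b ⊔ c) - (b ⊔ d)) := by
  simp only [Dfun_mul]
  rw [integral_add (integrable_Dfun _ _) (integrable_Dfun _ _), integral_Dfun, integral_Dfun]

lemma integrable_Dfun_mul (a b c d : ℝ) : Integrable (fun t => Dfun a b t * Dfun c d t) := by
  simp only [Dfun_mul]
  exact (integrable_Dfun _ _).add (integrable_Dfun _ _)

lemma max_eq_half (a b : ℝ) : a ⊔ b = (a + b + |a - b|) / 2 := by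
  have h1 := max_add_min a b
  have h2 := max_sub_min_eq_abs a b
  have h3 := abs_sub_comm a b
  linarith

theorem R_nonpos (n : ℕ) (hn : 1 ≤ n) (x y : Fin n → ℝ) :
    (∑ i : Fin n, ∑ j : Fin n, if i < j then |x i - x j| else 0)
      + (∑ i : Fin n, ∑ j : Fin n, if i < j then |y i - y j| else 0)
      - (∑ i : Fin n, ∑ j : Fin n, |x i - y j|) ≤ 0 := by
  have key : (0:ℝ) ≤ ∑ i : Fin n, ∑ j : Fin n,
      (((x i ⊔ y j) - (x i ⊔ x j)) + ((y i ⊔ x j) - (y i ⊔ y j))) := by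
    calc (0:ℝ) ≤ ∫ t, (∑ i : Fin n, Dfun (x i) (y i) t)^2 :=
          integral_nonneg fun t => sq_nonneg _
      _ = ∫ t, ∑ i : Fin n, ∑ j : Fin n, Dfun (x i) (y i) t * Dfun (x j) (y j) t := by
          congr 1; funext t; rw [sq, Finset.sum_mul_sum]
      _ = ∑ i : Fin n, ∑ j : Fin n, ∫ t, Dfun (x i) (y i) t * Dfun (x j) (y j) t := by
          rw [integral_finset_sum _ fun i _ =>
            integrable_finset_sum _ fun j _ => integrable_Dfun_mul _ _ _ _]
          exact Finset.sum_congr rfl fun i _ =>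
            integral_finset_sum _ fun j _ => integrable_Dfun_mul _ _ _ _
      _ = ∑ i : Fin n, ∑ j : Fin n,
          (((x i ⊔ y j) - (x i ⊔ x j)) + ((y i ⊔ x j) - (y i ⊔ y j))) := by
          exact Finset.sum_congr rfl fun i _ => Finset.sum_congr rfl fun j _ =>
            integral_Dfun_mul _ _ _ _
  -- algebraic identities
  have habs : ∀ f : Fin n → ℝ, ∑ i : Fin n, ∑ j : Fin n, |f i - f j|
      = 2 * ∑ i : Fin n, ∑ j : Fin n, (if i < j then |f i - f j| else 0) := by
    intro f
    have step : ∀ i j : Fin n, |f i - f j|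
        = (if i < j then |f i - f j| else 0) + (if j < i then |f j - f i| else 0) := by
      intro i j
      rcases lt_trichotomy i j with h | h | h
      · simp [h, asymm h]
      · simp [h]
      · simp [h, asymm h, abs_sub_comm]
    calc ∑ i : Fin n, ∑ j : Fin n, |f i - f j|
        = ∑ i : Fin n, ∑ j : Fin n, ((if i < j then |f i - f j| else 0)
            + (if j < i then |f j - f i| else 0)) :=
          Finset.sum_congr rfl fun i _ => Finset.sum_congr rfl fun j _ => step i j
      _ = (∑ i : Fin n, ∑ j : Fin n, (if i < j then |f i - f j| else 0))
            + ∑ i : Fin n, ∑ j : Fin n, (if j < i then |f j - f i| else 0) := by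
          simp [Finset.sum_add_distrib]
      _ = 2 * ∑ i : Fin n, ∑ j : Fin n, (if i < j then |f i - f j| else 0) := by
          rw [Finset.sum_comm (f := fun i j => if j < i then |f j - f i| else 0)]
          ring
  have hyx : ∑ i : Fin n, ∑ j : Fin n, |y i - x j| = ∑ i : Fin n, ∑ j : Fin n, |x i - y j| := by
    rw [Finset.sum_comm]
    exact Finset.sum_congr rfl fun i _ => Finset.sum_congr rfl fun j _ => abs_sub_comm _ _
  have heq : ∑ i : Fin n, ∑ j : Fin n,
      (((x i ⊔ y j) - (x i ⊔ x j)) + ((y i ⊔ x j) - (y i ⊔ y j)))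
      = (∑ i : Fin n, ∑ j : Fin n, |x i - y j|)
        - (∑ i : Fin n, ∑ j : Fin n, if i < j then |x i - x j| else 0)
        - (∑ i : Fin n, ∑ j : Fin n, if i < j then |y i - y j| else 0) := by
    have hterm : ∀ i j : Fin n,
        (((x i ⊔ y j) - (x i ⊔ x j)) + ((y i ⊔ x j) - (y i ⊔ y j)))
        = (|x i - y j| + |y i - x j| - |x i - x j| - |y i - y j|) / 2 := by
      intro i j
      rw [max_eq_half, max_eq_half, max_eq_half, max_eq_half]
      ring
    calc ∑ i : Fin n, ∑ j : Fin n,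
        (((x i ⊔ y j) - (x i ⊔ x j)) + ((y i ⊔ x j) - (y i ⊔ y j)))
        = ∑ i : Fin n, ∑ j : Fin n,
            ((|x i - y j| + |y i - x j| - |x i - x j| - |y i - y j|) / 2) :=
          Finset.sum_congr rfl fun i _ => Finset.sum_congr rfl fun j _ => hterm i j
      _ = ((∑ i : Fin n, ∑ j : Fin n, |x i - y j|)
            + (∑ i : Fin n, ∑ j : Fin n, |y i - x j|)
            - (∑ i : Fin n, ∑ j : Fin n, |x i - x j|)
            - (∑ i : Fin n, ∑ j : Fin n, |y i - y j|)) / 2 := by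
          simp only [← Finset.sum_div, Finset.sum_sub_distrib, Finset.sum_add_distrib]
      _ = _ := by
          rw [hyx, habs x, habs y]; ring
  linarith [key, heq.symm ▸ key]
end

section
/- For k ≥ 1 let y^{(k)} ∈ ℝ^k and define S_1 = 0 and, for m ≥ 2, S_m(y^{(1)}, …, y^{(m)}) = Σ_{1≤i≠j≤m} |y^{(m)}_i − y^{(m)}_j| − Σ_{i=1}^{m} Σ_{j=1}^{m−1} |y^{(m)}_i − y^{(m−1)}_j| + S_{m−1}(y^{(1)}, …, y^{(m−1)}). Then for every n ≥ 2, every x ∈ ℝ^n, every y^{(1)} ∈ ℝ^1, …, y^{(n−1)} ∈ ℝ^{n−1}, and every ε ∈ [0, 2(n − 1)], one has S_n(y^{(1)}, …, y^{(n−1)}, x) ≤ (1/2) Σ_{1≤i≠j≤n} |x_i − x_j| + ε ‖x‖ − (ε / ((n − 1)! · e)) Σ_{k=1}^{n−1} ‖y^{(k)}‖. -/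
open Finset
open MeasureTheory

/-- The recursively defined quantity `S_m(y^{(1)}, …, y^{(m)})`, where the `k`-th tuple
`y^{(k+1)}` (0-based index `k : Fin m`) has length `k + 1`:
`S_1 = 0` and
`S_m = Σ_{i≠j} |y^{(m)}_i − y^{(m)}_j| − Σ_{i=1}^m Σ_{j=1}^{m−1} |y^{(m)}_i − y^{(m−1)}_j| + S_{m−1}`. -/
def Srec : (m : ℕ) → ((k : Fin m) → Fin ((k : ℕ) + 1) → ℝ) → ℝ
  | 0, _ => 0
  | 1, _ => 0
  | m + 2, Y =>
      (∑ i : Fin (m + 2), ∑ j : Fin (m + 2),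
          if i ≠ j then |Y (Fin.last (m + 1)) i - Y (Fin.last (m + 1)) j| else 0)
        - (∑ i : Fin (m + 2), ∑ j : Fin (m + 1),
            |Y (Fin.last (m + 1)) i - Y ((Fin.last m).castSucc) j|)
        + Srec (m + 1) (fun k => Y k.castSucc)

lemma step_diff_sq (x y t : ℝ) :
    ((if t < x then (1:ℝ) else 0) - (if t < y then (1:ℝ) else 0))^2
      = Set.indicator (Set.Ico (min x y) (max x y)) (fun _ => (1:ℝ)) t := by
  have key : ∀ u v s : ℝ, u ≤ v →
      ((if s < u then (1:ℝ) else 0) - (if s < v then (1:ℝ) else 0))^2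
        = Set.indicator (Set.Ico u v) (fun _ => (1:ℝ)) s := by
    intro u v s huv
    by_cases h1 : s < u
    · have h2 : s < v := lt_of_lt_of_le h1 huv
      simp [Set.indicator_apply, Set.mem_Ico, h1, h2, not_le.2 h1]
    · by_cases h2 : s < v
      · simp [Set.indicator_apply, Set.mem_Ico, h1, h2, not_lt.1 h1]
      · simp [Set.indicator_apply, Set.mem_Ico, h1, h2]
  rcases le_total x y with h | h
  · rw [min_eq_left h, max_eq_right h]; exact key x y t h
  · rw [min_eq_right h, max_eq_left h, ← key y x t h]; ring

lemma integrable_step (x y : ℝ) :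
    Integrable (fun t => ((if t < x then (1:ℝ) else 0) - (if t < y then (1:ℝ) else 0))^2) := by
  have : (fun t => ((if t < x then (1:ℝ) else 0) - (if t < y then (1:ℝ) else 0))^2)
      = Set.indicator (Set.Ico (min x y) (max x y)) (fun _ => (1:ℝ)) := by
    funext t; exact step_diff_sq x y t
  rw [this]
  refine (integrable_indicator_iff measurableSet_Ico).2 ?_
  rw [integrableOn_const_iff]
  exact Or.inr (by rw [Real.volume_Ico]; exact ENNReal.ofReal_lt_top)

lemma abs_eq_integral (x y : ℝ) :
    |x - y| = ∫ t, ((if t < x then (1:ℝ) else 0) - (if t < y then (1:ℝ) else 0))^2 := by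
  have : (fun t => ((if t < x then (1:ℝ) else 0) - (if t < y then (1:ℝ) else 0))^2)
      = Set.indicator (Set.Ico (min x y) (max x y)) (fun _ => (1:ℝ)) := by
    funext t; exact step_diff_sq x y t
  rw [this, integral_indicator_const (1:ℝ) measurableSet_Ico, measureReal_def, Real.volume_Ico,
    smul_eq_mul, mul_one,
    ENNReal.toReal_ofReal (by simp [le_max_iff, min_le_iff] : (0:ℝ) ≤ max x y - min x y),
    max_sub_min_eq_abs]
  exact abs_sub_comm x y

lemma int_key (s n : ℤ) (hs : s = 1 ∨ s = 0 ∨ s = -1) : s * n - n^2 ≤ 0 := by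
  have h : 0 ≤ n * (n - s) := by
    rcases hs with h | h | h <;> subst h
    · rcases le_or_gt n 0 with h1 | h1
      · exact mul_nonneg_of_nonpos_of_nonpos h1 (by omega)
      · exact mul_nonneg (by omega) (by omega)
    · simpa using mul_self_nonneg n
    · rcases le_or_gt 0 n with h1 | h1
      · exact mul_nonneg h1 (by omega)
      · exact mul_nonneg_of_nonpos_of_nonpos (by omega) (by omega)
  nlinarith [h]

lemma hyper {ι : Type*} [Fintype ι] (c : ι → ℤ) (x : ι → ℝ)
    (hS : (∑ i, c i) = 1 ∨ (∑ i, c i) = 0 ∨ (∑ i, c i) = -1) :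
    ∑ i, ∑ j, (c i : ℝ) * (c j : ℝ) * |x i - x j| ≤ 0 := by
  classical
  set f : ι → ℝ → ℝ := fun i t => if t < x i then 1 else 0 with hf
  have hInt : ∀ i j : ι, Integrable (fun t => (c i : ℝ) * (c j : ℝ) * (f i t - f j t)^2) :=
    fun i j => (integrable_step (x i) (x j)).const_mul _
  have h1 : ∑ i, ∑ j, (c i : ℝ) * (c j : ℝ) * |x i - x j|
      = ∫ t, ∑ i, ∑ j, (c i : ℝ) * (c j : ℝ) * (f i t - f j t)^2 := by
    rw [integral_finset_sum _ (fun i _ => integrable_finset_sum _ (fun j _ => hInt i j))]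
    refine Finset.sum_congr rfl fun i _ => ?_
    rw [integral_finset_sum _ (fun j _ => hInt i j)]
    refine Finset.sum_congr rfl fun j _ => ?_
    rw [integral_const_mul, ← abs_eq_integral]
  rw [h1]
  apply integral_nonpos
  intro t
  simp only [Pi.zero_apply]
  -- pointwise bound
  have hsq : ∀ i, (f i t)^2 = f i t := by
    intro i; simp only [hf]; split <;> norm_num
  have expand : ∑ i, ∑ j, (c i : ℝ) * (c j : ℝ) * (f i t - f j t)^2
      = 2 * ((∑ i, (c i : ℝ)) * (∑ i, (c i : ℝ) * f i t) - (∑ i, (c i : ℝ) * f i t)^2) := by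
    have e : ∀ i j : ι, (c i : ℝ) * (c j : ℝ) * (f i t - f j t)^2
        = (c i : ℝ) * (f i t) * (c j : ℝ) + (c i : ℝ) * ((c j : ℝ) * (f j t))
          - 2 * ((c i : ℝ) * f i t) * ((c j : ℝ) * f j t) := by
      intro i j
      linear_combination ((c i : ℝ) * (c j : ℝ)) * hsq i + ((c i : ℝ) * (c j : ℝ)) * hsq j
    have inner : ∀ i : ι, ∑ j, (c i : ℝ) * (c j : ℝ) * (f i t - f j t)^2
        = (c i : ℝ) * (f i t) * (∑ j, (c j : ℝ)) + (c i : ℝ) * (∑ j, (c j : ℝ) * f j t)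
          - 2 * ((c i : ℝ) * f i t) * (∑ j, (c j : ℝ) * f j t) := by
      intro i
      rw [Finset.sum_congr rfl (fun j _ => e i j), Finset.sum_sub_distrib,
        Finset.sum_add_distrib, ← Finset.mul_sum, ← Finset.mul_sum, ← Finset.mul_sum]
    rw [Finset.sum_congr rfl (fun i _ => inner i), Finset.sum_sub_distrib,
      Finset.sum_add_distrib, ← Finset.sum_mul, ← Finset.sum_mul]
    have h3 : ∑ i : ι, 2 * ((c i:ℝ) * f i t) * (∑ j : ι, (c j:ℝ) * f j t)
        = 2 * ((∑ i : ι, (c i:ℝ) * f i t) * (∑ j : ι, (c j:ℝ) * f j t)) := by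
      rw [← Finset.sum_mul, ← Finset.mul_sum, mul_assoc]
    rw [h3]
    ring
  rw [expand]
  set G : ℤ := ∑ i, c i * (if t < x i then 1 else 0) with hGdef
  set S : ℤ := ∑ i, c i with hSdef
  have hG : (∑ i, (c i : ℝ) * f i t) = (G : ℝ) := by
    rw [hGdef]
    push_cast
    refine Finset.sum_congr rfl fun i _ => ?_
    simp only [hf]
  have hSc : (∑ i, (c i : ℝ)) = (S : ℝ) := by rw [hSdef]; push_cast; rfl
  rw [hG, hSc]
  have h2 : (S : ℝ) * (G : ℝ) - (G : ℝ)^2 ≤ 0 := by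
    exact_mod_cast int_key S G hS
  linarith

lemma key (q : ℕ) (a : Fin (q+1) → ℝ) (b : Fin q → ℝ) (lam : ℝ)
    (hl0 : 0 ≤ lam) (hl2 : lam ≤ 2) :
    (1/2) * (∑ i, ∑ j, |a i - a j|) + (1/2) * (∑ i, ∑ j, |b i - b j|)
      + lam * ((∑ j, |b j|) - ∑ i, |a i|)
      ≤ ∑ i : Fin (q+1), ∑ j : Fin q, |a i - b j| := by
  have main : ∀ w : ℤ, (w = 0 ∨ w = 2) →
      (∑ i, ∑ j, |a i - a j|) + (∑ i, ∑ j, |b i - b j|)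
        + 2*(w:ℝ)*((∑ j, |b j|) - ∑ i, |a i|)
        - 2 * ∑ i : Fin (q+1), ∑ j : Fin q, |a i - b j| ≤ 0 := by
    intro w hw
    have hs : (∑ i : Fin (q+1) ⊕ Option (Fin q),
        (Sum.elim (fun _ => (1:ℤ)) (fun o => Option.elim o (-w) (fun _ => -1))) i) = 1 - w := by
      simp [Fintype.sum_sum_type, Fintype.sum_option]
      ring
    have H := hyper (Sum.elim (fun _ => (1:ℤ)) (fun o => Option.elim o (-w) (fun _ => -1)))
      (Sum.elim a (fun o => Option.elim o 0 b))
      (by rw [hs]; rcases hw with h | h <;> subst h <;> norm_num)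
    have expand : (∑ i : Fin (q+1) ⊕ Option (Fin q), ∑ j : Fin (q+1) ⊕ Option (Fin q),
        ((Sum.elim (fun _ => (1:ℤ)) (fun o => Option.elim o (-w) (fun _ => -1))) i : ℝ)
        * ((Sum.elim (fun _ => (1:ℤ)) (fun o => Option.elim o (-w) (fun _ => -1))) j : ℝ)
        * |(Sum.elim a (fun o => Option.elim o 0 b)) i - (Sum.elim a (fun o => Option.elim o 0 b)) j|)
        = (∑ i, ∑ j, |a i - a j|) + (∑ i, ∑ j, |b i - b j|)
          + 2*(w:ℝ)*((∑ j, |b j|) - ∑ i, |a i|)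
          - 2 * ∑ i : Fin (q+1), ∑ j : Fin q, |a i - b j| := by
      simp only [Fintype.sum_sum_type, Fintype.sum_option, Sum.elim_inl, Sum.elim_inr,
        Option.elim, Int.cast_one, Int.cast_neg, Int.cast_ofNat, one_mul, mul_one, neg_mul,
        mul_neg, neg_neg, sub_zero, zero_sub, abs_neg, sub_self, abs_zero, mul_zero]
      simp only [show ∀ (i : Fin (q+1)) (j : Fin q), |b j - a i| = |a i - b j| from
        fun i j => abs_sub_comm _ _]
      simp only [Finset.sum_add_distrib, Finset.sum_neg_distrib, ← Finset.mul_sum, neg_zero,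
        add_zero, zero_add]
      rw [show (∑ x : Fin q, ∑ x1 : Fin (q+1), |a x1 - b x|)
          = ∑ i : Fin (q+1), ∑ j : Fin q, |a i - b j| from Finset.sum_comm]
      ring
    rw [expand] at H
    exact H
  have h0 := main 0 (Or.inl rfl)
  have h2 := main 2 (Or.inr rfl)
  push_cast at h0 h2
  rcases le_total ((∑ j, |b j|) - ∑ i, |a i|) 0 with hD | hD
  · have : lam * ((∑ j, |b j|) - ∑ i, |a i|) ≤ 0 := mul_nonpos_of_nonneg_of_nonpos hl0 hD
    linarith
  · have : lam * ((∑ j, |b j|) - ∑ i, |a i|) ≤ 2 * ((∑ j, |b j|) - ∑ i, |a i|) :=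
      mul_le_mul_of_nonneg_right hl2 hD
    linarith

lemma ifsum_eq (n : ℕ) (v : Fin n → ℝ) :
    (∑ i, ∑ j, if i ≠ j then |v i - v j| else 0) = ∑ i, ∑ j, |v i - v j| := by
  refine Finset.sum_congr rfl fun i _ => Finset.sum_congr rfl fun j _ => ?_
  by_cases h : i = j
  · subst h; simp
  · simp [h]

lemma absSum_nonneg (n : ℕ) (v : Fin n → ℝ) : 0 ≤ ∑ i, |v i| :=
  Finset.sum_nonneg fun i _ => abs_nonneg _

lemma Srec_aux : ∀ (m : ℕ) (Z : (k : Fin (m + 2)) → Fin ((k : ℕ) + 1) → ℝ)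
    (ε c : ℝ), 0 ≤ c → (m + 1 : ℝ) * c ≤ 2 → (m + 1 : ℝ) * c ≤ ε → ε ≤ 2 * (m + 1) →
    Srec (m + 2) Z ≤
      (1/2) * (∑ i : Fin (m+2), ∑ j : Fin (m+2),
          |Z (Fin.last (m+1)) i - Z (Fin.last (m+1)) j|)
        + ε * (∑ i : Fin (m+2), |Z (Fin.last (m+1)) i|)
        - c * ∑ k : Fin (m+1), ∑ j : Fin ((k : ℕ)+1), |Z k.castSucc j| := by
  intro m
  induction m with
  | zero =>
    intro Z ε c hc0 hc2 hcε hεt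
    norm_num at hc2 hcε hεt
    show Srec 2 Z ≤
      (1/2) * (∑ i : Fin 2, ∑ j : Fin 2, |Z (Fin.last 1) i - Z (Fin.last 1) j|)
        + ε * (∑ i : Fin 2, |Z (Fin.last 1) i|)
        - c * ∑ k : Fin 1, ∑ j : Fin ((k : ℕ)+1), |Z k.castSucc j|
    rw [show Srec 2 Z = (∑ i : Fin 2, ∑ j : Fin 2,
        if i ≠ j then |Z (Fin.last 1) i - Z (Fin.last 1) j| else 0)
        - (∑ i : Fin 2, ∑ j : Fin 1, |Z (Fin.last 1) i - Z ((Fin.last 0).castSucc) j|)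
        + Srec 1 (fun k => Z k.castSucc) from rfl]
    have h1 : Srec 1 (fun k => Z k.castSucc) = 0 := rfl
    rw [h1, ifsum_eq]
    have hk := key 1 (Z (Fin.last 1)) (Z ((Fin.last 0).castSucc)) c hc0 hc2
    have hb' : (∑ i : Fin 1, ∑ j : Fin 1,
        |Z ((Fin.last 0).castSucc) i - Z ((Fin.last 0).castSucc) j|) = 0 := by simp
    rw [hb'] at hk
    have hsum : (∑ k : Fin 1, ∑ j : Fin ((k : ℕ)+1), |Z k.castSucc j|)
        = ∑ j : Fin 1, |Z ((Fin.last 0).castSucc) j| := by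
      rw [Fin.sum_univ_one]
      rfl
    rw [hsum]
    have hna : 0 ≤ ∑ i : Fin 2, |Z (Fin.last 1) i| := absSum_nonneg _ _
    have h3 : c * (∑ i : Fin 2, |Z (Fin.last 1) i|) ≤ ε * (∑ i : Fin 2, |Z (Fin.last 1) i|) :=
      mul_le_mul_of_nonneg_right hcε hna
    have e1 : c * ((∑ j : Fin 1, |Z ((Fin.last 0).castSucc) j|) - ∑ i : Fin 2, |Z (Fin.last 1) i|)
        = c * (∑ j : Fin 1, |Z ((Fin.last 0).castSucc) j|)
          - c * (∑ i : Fin 2, |Z (Fin.last 1) i|) := by ring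
    rw [e1] at hk
    linarith
  | succ m IH =>
    intro Z ε c hc0 hc2 hcε hεt
    push_cast at hc2 hcε hεt
    have hε0 : 0 ≤ ε := le_trans (by positivity) hcε
    set lam := min 2 ε with hlam
    have hlam0 : 0 ≤ lam := le_min (by norm_num) hε0
    have hlam2 : lam ≤ 2 := min_le_left _ _
    have hlamε : lam ≤ ε := min_le_right _ _
    set ε' := lam - c with hε'
    have hclam : ((m:ℝ) + 2) * c ≤ lam := le_min (by linarith) (by linarith)
    have hIH := IH (fun k => Z k.castSucc) ε' c hc0
      (by push_cast; linarith)
      (by push_cast; linarith)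
      (by push_cast; linarith [hlam2, hc0])
    set a := Z (Fin.last (m+2)) with ha
    set b := Z ((Fin.last (m+1)).castSucc) with hb
    have hk := key (m+2) a b lam hlam0 hlam2
    show Srec (m+3) Z ≤
      (1/2) * (∑ i : Fin (m+3), ∑ j : Fin (m+3), |a i - a j|)
        + ε * (∑ i : Fin (m+3), |a i|)
        - c * ∑ k : Fin (m+2), ∑ j : Fin ((k : ℕ)+1), |Z k.castSucc j|
    rw [show Srec (m+3) Z = (∑ i : Fin (m + 3), ∑ j : Fin (m + 3),
          if i ≠ j then |a i - a j| else 0)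
        - (∑ i : Fin (m + 3), ∑ j : Fin (m + 2), |a i - b j|)
        + Srec (m + 2) (fun k => Z k.castSucc) from rfl]
    rw [ifsum_eq]
    have hsplit : (∑ k : Fin (m+2), ∑ j : Fin ((k : ℕ)+1), |Z k.castSucc j|)
        = (∑ k : Fin (m+1), ∑ j : Fin ((k : ℕ)+1), |Z k.castSucc.castSucc j|)
          + ∑ j : Fin (m+2), |b j| := by
      rw [Fin.sum_univ_castSucc
        (f := fun k : Fin (m+2) => ∑ j : Fin ((k : ℕ)+1), |Z k.castSucc j|)]
      rfl
    rw [hsplit]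
    have hna : 0 ≤ ∑ i : Fin (m+3), |a i| := absSum_nonneg _ _
    have h3 : lam * (∑ i : Fin (m+3), |a i|) ≤ ε * (∑ i : Fin (m+3), |a i|) :=
      mul_le_mul_of_nonneg_right hlamε hna
    have e1 : lam * ((∑ j : Fin (m+2), |b j|) - ∑ i : Fin (m+3), |a i|)
        = lam * (∑ j : Fin (m+2), |b j|) - lam * (∑ i : Fin (m+3), |a i|) := by ring
    rw [e1] at hk
    have hIH' : Srec (m + 2) (fun k => Z k.castSucc) ≤
        (1/2) * (∑ i : Fin (m+2), ∑ j : Fin (m+2), |b i - b j|)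
        + ε' * (∑ j : Fin (m+2), |b j|)
        - c * ∑ k : Fin (m+1), ∑ j : Fin ((k : ℕ)+1), |Z k.castSucc.castSucc j| := hIH
    have e2 : ε' * (∑ j : Fin (m+2), |b j|)
        = lam * (∑ j : Fin (m+2), |b j|) - c * (∑ j : Fin (m+2), |b j|) := by
      rw [hε']; ring
    rw [e2] at hIH'
    have e3 : c * ((∑ k : Fin (m+1), ∑ j : Fin ((k : ℕ)+1), |Z k.castSucc.castSucc j|)
          + ∑ j : Fin (m+2), |b j|)
        = c * (∑ k : Fin (m+1), ∑ j : Fin ((k : ℕ)+1), |Z k.castSucc.castSucc j|)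
          + c * (∑ j : Fin (m+2), |b j|) := by ring
    rw [e3]
    linarith

lemma nat_aux (m : ℕ) : m + 1 ≤ 2 * m.factorial := by
  cases m with
  | zero => decide
  | succ m => have := Nat.self_le_factorial (m+1); omega


theorem Srec_bound (m : ℕ) (x : Fin (m + 2) → ℝ)
    (Y : (k : Fin (m + 1)) → Fin ((k : ℕ) + 1) → ℝ) (ε : ℝ)
    (hε : ε ∈ Set.Icc (0 : ℝ) (2 * (m + 1))) :
    Srec (m + 2)
        (Fin.lastCases (motive := fun k : Fin (m + 2) => Fin ((k : ℕ) + 1) → ℝ) x Y)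
      ≤ (1 / 2) * (∑ i : Fin (m + 2), ∑ j : Fin (m + 2), if i ≠ j then |x i - x j| else 0)
        + ε * (∑ i : Fin (m + 2), |x i|)
        - (ε / ((Nat.factorial (m + 1) : ℝ) * Real.exp 1))
            * ∑ k : Fin (m + 1), ∑ j : Fin ((k : ℕ) + 1), |Y k j| := by
  obtain ⟨hε0, hεt⟩ := hε
  set F : ℝ := (Nat.factorial (m + 1) : ℝ) with hF
  have hFpos : (0:ℝ) < F := by rw [hF]; exact_mod_cast Nat.factorial_pos _
  have he2 : (2:ℝ) ≤ Real.exp 1 := by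
    have := Real.exp_one_gt_d9; norm_num at this ⊢; linarith
  have he1 : (1:ℝ) ≤ Real.exp 1 := by linarith
  have hD : (0:ℝ) < F * Real.exp 1 := by positivity
  set c : ℝ := ε / (F * Real.exp 1) with hc
  have hc0 : 0 ≤ c := div_nonneg hε0 (le_of_lt hD)
  have hmF : ((m:ℝ) + 1) ≤ F := by
    rw [hF]
    exact_mod_cast Nat.cast_le.2 (Nat.self_le_factorial (m+1))
  have hsqF : ((m:ℝ) + 1)^2 ≤ 2 * F := by
    rw [hF]
    have h := nat_aux m
    have h2 : (m+1)^2 ≤ 2 * Nat.factorial (m+1) := by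
      have : (m+1)^2 = (m+1) * (m+1) := by ring
      rw [this, Nat.factorial_succ]
      calc (m+1) * (m+1) ≤ (m+1) * (2 * m.factorial) := Nat.mul_le_mul_left _ h
        _ = 2 * ((m+1) * m.factorial) := by ring
    exact_mod_cast h2
  have h1 : ((m:ℝ) + 1) * c ≤ ε := by
    rw [hc, ← mul_div_assoc, div_le_iff₀ hD]
    nlinarith [mul_le_mul_of_nonneg_left hmF hε0, mul_le_mul_of_nonneg_left he1 (mul_nonneg hε0 hFpos.le)]
  have h2 : ((m:ℝ) + 1) * c ≤ 2 := by
    rw [hc, ← mul_div_assoc, div_le_iff₀ hD]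
    nlinarith [mul_le_mul_of_nonneg_left hεt (by positivity : (0:ℝ) ≤ (m:ℝ)+1), mul_le_mul_of_nonneg_left he2 hFpos.le, hsqF]
  have haux := Srec_aux m
    (Fin.lastCases (motive := fun k : Fin (m + 2) => Fin ((k : ℕ) + 1) → ℝ) x Y)
    ε c hc0 h2 h1 hεt
  rw [ifsum_eq]
  simp only [Fin.lastCases_last, Fin.lastCases_castSucc] at haux
  exact haux
end
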